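/- Let p be prime and f ∈ 𝔽_p[u₁^{±1}, u₂^{±1}] a Laurent polynomial whose Newton polygon has an edge with outward normal v ∈ ℤ², primitive. Let X_f = {x ∈ 𝔽_p^{ℤ²} : Σ_n f_n x_{m+n} = 0 for all m}. Then the subgroup Y₀ = {x ∈ X_f : x_n = 0 for all n with v·n < 0} is infinite. -/

import Mathlib

namespace EdgeHP

variable {p : ℕ}

def lvl (v n : ℤ × ℤ) : ℤ := v.1 * n.1 + v.2 * n.2
def pos (u n : ℤ × ℤ) : ℤ := u.1 * n.2 - u.2 * n.1

def solve (c g w : ℤ → ZMod p) (d : Finset ℤ) (kmin k0 : ℤ)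
    (hd : ∀ k ∈ d, kmin ≤ k ∧ k ≤ k0) (hk : kmin < k0) (i : ℤ) : ZMod p :=
  if k0 ≤ i then
    (c k0)⁻¹ * (g (i - k0) - ∑ k ∈ (d.erase k0).attach,
      c k.1 * solve c g w d kmin k0 hd hk (i - k0 + k.1))
  else if i < kmin then
    (c kmin)⁻¹ * (g (i - kmin) - ∑ k ∈ (d.erase kmin).attach,
      c k.1 * solve c g w d kmin k0 hd hk (i - kmin + k.1))
  else w i
termination_by ((i - k0 + 1).toNat + (kmin - i).toNat)
decreasing_by
  · have h1 := (hd k.1 (Finset.mem_of_mem_erase k.2)).1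
    have h2 := (hd k.1 (Finset.mem_of_mem_erase k.2)).2
    have h3 := Finset.ne_of_mem_erase k.2
    omega
  · have h1 := (hd k.1 (Finset.mem_of_mem_erase k.2)).1
    have h2 := (hd k.1 (Finset.mem_of_mem_erase k.2)).2
    have h3 := Finset.ne_of_mem_erase k.2
    omega

def levels (f : (ℤ × ℤ) →₀ ZMod p) (T : Finset (ℤ × ℤ)) (v u : ℤ × ℤ) (s : ℤ)
    (c : ℤ → ZMod p) (d : Finset ℤ) (kmin k0 : ℤ)
    (hlow : ∀ n ∈ f.support \ T, lvl v n < s)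
    (hd : ∀ k ∈ d, kmin ≤ k ∧ k ≤ k0) (hk : kmin < k0) (L : ℕ) : ℤ → ZMod p :=
  solve c
    (fun j => - ∑ n ∈ (f.support \ T).attach,
      f n.1 * (if h : 0 ≤ (L : ℤ) + lvl v n.1 - s then
        levels f T v u s c d kmin k0 hlow hd hk ((L : ℤ) + lvl v n.1 - s).toNat (j + pos u n.1)
      else 0))
    (fun _ => if L = 0 then 1 else 0) d kmin k0 hd hk
termination_by L
decreasing_by
  have := hlow n.1 n.2
  omega

/-- value of the solution at (shifted) level `t ∈ ℤ`: zero for negative levels. -/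
def Ylow (f : (ℤ × ℤ) →₀ ZMod p) (T : Finset (ℤ × ℤ)) (v u : ℤ × ℤ) (s : ℤ)
    (c : ℤ → ZMod p) (d : Finset ℤ) (kmin k0 : ℤ)
    (hlow : ∀ n ∈ f.support \ T, lvl v n < s)
    (hd : ∀ k ∈ d, kmin ≤ k ∧ k ≤ k0) (hk : kmin < k0) (t : ℤ) : ℤ → ZMod p :=
  if h : 0 ≤ t then levels f T v u s c d kmin k0 hlow hd hk t.toNat else 0

theorem levels_eq (f : (ℤ × ℤ) →₀ ZMod p) (T : Finset (ℤ × ℤ)) (v u : ℤ × ℤ) (s : ℤ)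
    (c : ℤ → ZMod p) (d : Finset ℤ) (kmin k0 : ℤ)
    (hlow : ∀ n ∈ f.support \ T, lvl v n < s)
    (hd : ∀ k ∈ d, kmin ≤ k ∧ k ≤ k0) (hk : kmin < k0) (L : ℕ) :
    levels f T v u s c d kmin k0 hlow hd hk L =
    solve c
      (fun j => - ∑ n ∈ f.support \ T,
        f n * Ylow f T v u s c d kmin k0 hlow hd hk ((L : ℤ) + lvl v n - s) (j + pos u n))
      (fun _ => if L = 0 then 1 else 0) d kmin k0 hd hk := by
  have hg : (fun j => - ∑ n ∈ (f.support \ T).attach,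
      f n.1 * (if h : 0 ≤ (L : ℤ) + lvl v n.1 - s then
        levels f T v u s c d kmin k0 hlow hd hk ((L : ℤ) + lvl v n.1 - s).toNat (j + pos u n.1)
      else 0))
      = (fun j => - ∑ n ∈ f.support \ T,
        f n * Ylow f T v u s c d kmin k0 hlow hd hk ((L : ℤ) + lvl v n - s) (j + pos u n)) := by
    funext j
    rw [← Finset.sum_attach (f.support \ T)
      (fun n => f n * Ylow f T v u s c d kmin k0 hlow hd hk ((L : ℤ) + lvl v n - s) (j + pos u n))]
    congr 1
    refine Finset.sum_congr rfl fun n _ => ?_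
    by_cases h : 0 ≤ (L : ℤ) + lvl v n.1 - s <;> simp [Ylow, h, ite_apply, mul_ite, mul_zero]
  rw [levels, hg]

theorem solve_window (c g w : ℤ → ZMod p) (d : Finset ℤ) (kmin k0 : ℤ)
    (hd : ∀ k ∈ d, kmin ≤ k ∧ k ≤ k0) (hk : kmin < k0) (i : ℤ)
    (h1 : kmin ≤ i) (h2 : i < k0) :
    solve c g w d kmin k0 hd hk i = w i := by
  rw [solve, if_neg (by omega), if_neg (by omega)]

theorem solve_spec [Fact p.Prime] (c g w : ℤ → ZMod p) (d : Finset ℤ) (kmin k0 : ℤ)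
    (hd : ∀ k ∈ d, kmin ≤ k ∧ k ≤ k0) (hk : kmin < k0)
    (hk0d : k0 ∈ d) (hkmd : kmin ∈ d) (hc0 : c k0 ≠ 0) (hcm : c kmin ≠ 0) (j : ℤ) :
    ∑ k ∈ d, c k * solve c g w d kmin k0 hd hk (j + k) = g j := by
  rcases le_or_gt 0 j with hj | hj
  · have key : solve c g w d kmin k0 hd hk (j + k0)
        = (c k0)⁻¹ * (g j - ∑ k ∈ d.erase k0, c k * solve c g w d kmin k0 hd hk (j + k)) := by
      rw [solve, if_pos (by omega : k0 ≤ j + k0)]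
      rw [Finset.sum_attach (d.erase k0)
        (fun k => c k * solve c g w d kmin k0 hd hk (j + k0 - k0 + k))]
      simp only [add_sub_cancel_right]
    rw [← Finset.add_sum_erase d _ hk0d, key, ← mul_assoc, mul_inv_cancel₀ hc0, one_mul]
    ring
  · have key : solve c g w d kmin k0 hd hk (j + kmin)
        = (c kmin)⁻¹ * (g j - ∑ k ∈ d.erase kmin, c k * solve c g w d kmin k0 hd hk (j + k)) := by
      rw [solve, if_neg (by omega : ¬ k0 ≤ j + kmin), if_pos (by omega : j + kmin < kmin)]
      rw [Finset.sum_attach (d.erase kmin)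
        (fun k => c k * solve c g w d kmin k0 hd hk (j + kmin - kmin + k))]
      simp only [add_sub_cancel_right]
    rw [← Finset.add_sum_erase d _ hkmd, key, ← mul_assoc, mul_inv_cancel₀ hcm, one_mul]
    ring

theorem levels_spec [Fact p.Prime] (f : (ℤ × ℤ) →₀ ZMod p) (T : Finset (ℤ × ℤ))
    (v u : ℤ × ℤ) (s : ℤ) (c : ℤ → ZMod p) (d : Finset ℤ) (kmin k0 : ℤ)
    (hlow : ∀ n ∈ f.support \ T, lvl v n < s)
    (hd : ∀ k ∈ d, kmin ≤ k ∧ k ≤ k0) (hk : kmin < k0)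
    (hk0d : k0 ∈ d) (hkmd : kmin ∈ d) (hc0 : c k0 ≠ 0) (hcm : c kmin ≠ 0) (L : ℕ) (j : ℤ) :
    ∑ k ∈ d, c k * levels f T v u s c d kmin k0 hlow hd hk L (j + k)
      = - ∑ n ∈ f.support \ T,
          f n * Ylow f T v u s c d kmin k0 hlow hd hk ((L : ℤ) + lvl v n - s) (j + pos u n) := by
  simp only [levels_eq f T v u s c d kmin k0 hlow hd hk L]
  exact solve_spec c _ _ d kmin k0 hd hk hk0d hkmd hc0 hcm j

theorem levels_zero_window (f : (ℤ × ℤ) →₀ ZMod p) (T : Finset (ℤ × ℤ))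
    (v u : ℤ × ℤ) (s : ℤ) (c : ℤ → ZMod p) (d : Finset ℤ) (kmin k0 : ℤ)
    (hlow : ∀ n ∈ f.support \ T, lvl v n < s)
    (hd : ∀ k ∈ d, kmin ≤ k ∧ k ≤ k0) (hk : kmin < k0) (i : ℤ)
    (h1 : kmin ≤ i) (h2 : i < k0) :
    levels f T v u s c d kmin k0 hlow hd hk 0 i = 1 := by
  rw [levels_eq, solve_window _ _ _ _ _ _ _ _ i h1 h2]
  simp

end EdgeHP

open EdgeHP in
/-- If `v` is a primitive outward normal of an edge of the Newton polygon of
`f ∈ 𝔽_p[u₁^{±1},u₂^{±1}]` (the face of the support maximizing `n ↦ v·n` contains at least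
two points), then the subgroup `Y₀ = {x ∈ X_f : x_n = 0 for v·n < 0}` of the shift system
`X_f = {x ∈ 𝔽_p^{ℤ²} : Σ_n f_n x_{m+n} = 0}` is infinite. -/
theorem edge_normal_halfplane_subgroup_infinite (p : ℕ) [Fact p.Prime]
    (f : (ℤ × ℤ) →₀ ZMod p) (v : ℤ × ℤ) (hprim : Int.gcd v.1 v.2 = 1)
    (hedge : ∃ a ∈ f.support, ∃ b ∈ f.support, a ≠ b ∧
      (∀ n ∈ f.support, v.1 * n.1 + v.2 * n.2 ≤ v.1 * a.1 + v.2 * a.2) ∧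
      v.1 * b.1 + v.2 * b.2 = v.1 * a.1 + v.2 * a.2) :
    {x : (ℤ × ℤ) → ZMod p |
      (∀ m : ℤ × ℤ, ∑ n ∈ f.support, f n * x (m + n) = 0) ∧
      (∀ n : ℤ × ℤ, v.1 * n.1 + v.2 * n.2 < 0 → x n = 0)}.Infinite := by
  classical
  haveI : Fact (1 < p) := ⟨(Fact.out : p.Prime).one_lt⟩
  obtain ⟨a, ha, b, hb, hab, hmax, hlvlb⟩ := hedge
  obtain ⟨α, β, hab1⟩ := Int.isCoprime_iff_gcd_eq_one.mpr hprim
  set u : ℤ × ℤ := (α, β) with hu_def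
  have hu : v.1 * u.1 + v.2 * u.2 = 1 := by simpa [hu_def, mul_comm] using hab1
  -- linear algebra: (lvl, pos) determines the point
  have e1 : ∀ n : ℤ × ℤ, n.1 = lvl v n * u.1 - pos u n * v.2 := by
    intro n; simp only [lvl, pos]; linear_combination (-n.1) * hu
  have e2 : ∀ n : ℤ × ℤ, n.2 = lvl v n * u.2 + pos u n * v.1 := by
    intro n; simp only [lvl, pos]; linear_combination (-n.2) * hu
  have inj : ∀ n n' : ℤ × ℤ, lvl v n = lvl v n' → pos u n = pos u n' → n = n' := by
    intro n n' h1 h2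
    exact Prod.ext (by rw [e1 n, e1 n', h1, h2]) (by rw [e2 n, e2 n', h1, h2])
  set s : ℤ := lvl v a with hs_def
  have hlb : lvl v b = s := hlvlb
  have hmax' : ∀ n ∈ f.support, lvl v n ≤ s := hmax
  set T : Finset (ℤ × ℤ) := f.support.filter (fun n => lvl v n = s) with hT_def
  have haT : a ∈ T := by simp [hT_def, ha, hs_def]
  have hbT : b ∈ T := by simp [hT_def, hb, hlb]
  have hlvlT : ∀ n ∈ T, lvl v n = s := by
    intro n hn; exact (Finset.mem_filter.mp hn).2
  have hlow : ∀ n ∈ f.support \ T, lvl v n < s := by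
    intro n hn
    rw [Finset.mem_sdiff] at hn
    refine lt_of_le_of_ne (hmax' n hn.1) fun h => hn.2 ?_
    exact Finset.mem_filter.mpr ⟨hn.1, h⟩
  set d : Finset ℤ := T.image (pos u) with hd_def
  have hdne : d.Nonempty := ⟨pos u a, Finset.mem_image_of_mem _ haT⟩
  set k0 : ℤ := d.max' hdne with hk0_def
  set kmin : ℤ := d.min' hdne with hkmin_def
  have hdbd : ∀ k ∈ d, kmin ≤ k ∧ k ≤ k0 := fun k hk => ⟨d.min'_le k hk, d.le_max' k hk⟩
  have hposab : pos u a ≠ pos u b := by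
    intro h
    exact hab (inj a b (by rw [hlb, hs_def]) h)
  have hkk : kmin < k0 := by
    have h1 := hdbd (pos u a) (Finset.mem_image_of_mem _ haT)
    have h2 := hdbd (pos u b) (Finset.mem_image_of_mem _ hbT)
    rcases lt_or_ge kmin k0 with h | h
    · exact h
    · exact absurd (by omega : pos u a = pos u b) hposab
  set c : ℤ → ZMod p := fun k => ∑ n ∈ T, if pos u n = k then f n else 0 with hc_def
  -- for k in d, c k equals the (nonzero) coefficient at the unique point of T with position k
  have hcd : ∀ k ∈ d, c k ≠ 0 := by
    intro k hk
    obtain ⟨n0, hn0T, hn0⟩ := Finset.mem_image.mp hk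
    have : c k = f n0 := by
      show (∑ n ∈ T, if pos u n = k then f n else 0) = f n0
      rw [Finset.sum_eq_single n0]
      · rw [if_pos hn0]
      · intro n hn hne
        refine if_neg fun hpn => hne (inj n n0 ?_ (by rw [hpn, hn0]))
        rw [hlvlT n hn, hlvlT n0 hn0T]
      · intro h; exact absurd hn0T h
    rw [this]
    exact Finsupp.mem_support_iff.mp (Finset.mem_filter.mp hn0T).1
  have hk0d : k0 ∈ d := d.max'_mem hdne
  have hkmd : kmin ∈ d := d.min'_mem hdne
  have hc0 : c k0 ≠ 0 := hcd k0 hk0d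
  have hcm : c kmin ≠ 0 := hcd kmin hkmd
  -- the family of solutions
  set Y : ℤ → ℤ → ZMod p := Ylow f T v u s c d kmin k0 hlow hdbd hkk with hY_def
  have hYneg : ∀ t : ℤ, t < 0 → Y t = 0 := by
    intro t ht; rw [hY_def, Ylow, dif_neg (by omega)]
  set x : ℕ → (ℤ × ℤ) → ZMod p := fun N n => Y (lvl v n - N) (pos u n) with hx_def
  have hladd : ∀ m n : ℤ × ℤ, lvl v (m + n) = lvl v m + lvl v n := by
    intro m n; simp only [lvl, Prod.fst_add, Prod.snd_add]; ring
  have hpadd : ∀ m n : ℤ × ℤ, pos u (m + n) = pos u m + pos u n := by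
    intro m n; simp only [pos, Prod.fst_add, Prod.snd_add]; ring
  -- membership
  have hmem : ∀ N : ℕ, x N ∈ {x : (ℤ × ℤ) → ZMod p |
      (∀ m : ℤ × ℤ, ∑ n ∈ f.support, f n * x (m + n) = 0) ∧
      (∀ n : ℤ × ℤ, v.1 * n.1 + v.2 * n.2 < 0 → x n = 0)} := by
    intro N
    constructor
    · intro m
      have step1 : ∑ n ∈ f.support, f n * x N (m + n)
          = ∑ n ∈ f.support, f n * Y (lvl v m + lvl v n - N) (pos u m + pos u n) := by
        refine Finset.sum_congr rfl fun n _ => ?_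
        simp only [hx_def, hladd, hpadd]
      rw [step1]
      rcases lt_or_ge (lvl v m + s - N) 0 with hneg | hpos
      · refine Finset.sum_eq_zero fun n hn => ?_
        have h1 := hmax' n hn
        rw [hYneg (lvl v m + lvl v n - ↑N) (by omega)]
        simp
      · set L : ℕ := (lvl v m + s - N).toNat with hL_def
        have hL : (L : ℤ) = lvl v m + s - N := Int.toNat_of_nonneg hpos
        have hTsub : T ⊆ f.support := Finset.filter_subset _ _
        rw [← Finset.sum_sdiff hTsub]
        have hTpart : ∑ n ∈ T, f n * Y (lvl v m + lvl v n - N) (pos u m + pos u n)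
            = ∑ k ∈ d, c k * levels f T v u s c d kmin k0 hlow hdbd hkk L (pos u m + k) := by
          have hswap : ∀ k ∈ d, c k * levels f T v u s c d kmin k0 hlow hdbd hkk L (pos u m + k)
              = ∑ n ∈ T, if pos u n = k then
                  f n * levels f T v u s c d kmin k0 hlow hdbd hkk L (pos u m + pos u n) else 0 := by
            intro k hk
            rw [hc_def, Finset.sum_mul]
            refine Finset.sum_congr rfl fun n hn => ?_
            by_cases h : pos u n = k
            · rw [if_pos h, if_pos h, h]
            · rw [if_neg h, if_neg h, zero_mul]
          rw [Finset.sum_congr rfl hswap, Finset.sum_comm]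
          refine Finset.sum_congr rfl fun n hn => ?_
          rw [Finset.sum_ite_eq d (pos u n)
            (fun _ => f n * levels f T v u s c d kmin k0 hlow hdbd hkk L (pos u m + pos u n)),
            if_pos (Finset.mem_image_of_mem _ hn)]
          have harg : lvl v m + lvl v n - N = (L : ℤ) := by rw [hL, hlvlT n hn]
          rw [harg, hY_def, Ylow, dif_pos (by omega : (0:ℤ) ≤ (L:ℤ))]
          simp
        rw [hTpart, levels_spec f T v u s c d kmin k0 hlow hdbd hkk hk0d hkmd hc0 hcm L (pos u m)]
        have harg2 : ∀ n ∈ f.support \ T,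
            f n * Ylow f T v u s c d kmin k0 hlow hdbd hkk ((L : ℤ) + lvl v n - s) (pos u m + pos u n)
            = f n * Y (lvl v m + lvl v n - N) (pos u m + pos u n) := by
          intro n hn
          have harg : (L : ℤ) + lvl v n - s = lvl v m + lvl v n - ↑N := by omega
          rw [harg, hY_def]
        rw [Finset.sum_congr rfl harg2]
        ring
    · intro n hn
      have hln : lvl v n < 0 := hn
      show Y (lvl v n - ↑N) (pos u n) = 0
      rw [hYneg (lvl v n - ↑N) (by omega)]
      simp
  -- a witness point at level N, position kmin
  set pt : ℕ → ℤ × ℤ := fun N => ((N : ℤ) * u.1 - kmin * v.2, (N : ℤ) * u.2 + kmin * v.1)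
    with hpt_def
  have hptl : ∀ N : ℕ, lvl v (pt N) = N := by
    intro N; simp only [hpt_def, lvl]; linear_combination (N : ℤ) * hu
  have hptp : ∀ N : ℕ, pos u (pt N) = kmin := by
    intro N; simp only [hpt_def, pos]; linear_combination kmin * hu
  have hxpt : ∀ N : ℕ, x N (pt N) = 1 := by
    intro N
    simp only [hx_def, hptl, hptp, sub_self]
    rw [hY_def, Ylow, dif_pos le_rfl]
    exact levels_zero_window f T v u s c d kmin k0 hlow hdbd hkk kmin le_rfl hkk
  have hinj : Function.Injective x := by
    intro N M hNM
    by_contra hne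
    rcases Nat.lt_or_ge N M with h | h
    · have h1 := hxpt N
      have h2 : x M (pt N) = 0 := by
        simp only [hx_def, hptl, hptp]
        rw [hYneg ((N : ℤ) - ↑M) (by omega : (N : ℤ) - ↑M < 0)]
        simp
      rw [hNM] at h1
      rw [h1] at h2
      exact one_ne_zero h2
    · have h : M < N := by omega
      have h1 := hxpt M
      have h2 : x N (pt M) = 0 := by
        simp only [hx_def, hptl, hptp]
        rw [hYneg ((M : ℤ) - ↑N) (by omega : (M : ℤ) - ↑N < 0)]
        simp
      rw [← hNM] at h1
      rw [h1] at h2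
      exact one_ne_zero h2
  exact Set.infinite_of_injective_forall_mem hinj hmem
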